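/- Let u, v be C² smooth solutions of ∂ₜu + u∂ₓu = v, ∂ₜv + v∂ₓv = -u on 𝕋 × [0,T) with u(·,t), v(·,t) odd for all t. Define U(t) = ∂ₓu(0,t) and V(t) = ∂ₓv(0,t). Then U' = -U² + V and V' = -V² - U. -/

import Mathlib

open Real

private lemma key_aux (T : ℝ) (f g : ℝ → ℝ → ℝ)
    (hf : ContDiff ℝ 2 (fun p : ℝ × ℝ => f p.1 p.2))
    (hg : ContDiff ℝ 2 (fun p : ℝ × ℝ => g p.1 p.2))
    (heq : ∀ x : ℝ, ∀ t ∈ Set.Ico (0:ℝ) T,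
      deriv (fun s => f x s) t + f x t * deriv (fun y => f y t) x = g x t)
    (hf0 : ∀ t ∈ Set.Ico (0:ℝ) T, f 0 t = 0) :
    ∀ t ∈ Set.Ico (0:ℝ) T,
      HasDerivWithinAt (fun s => deriv (fun y => f y s) 0)
        (-(deriv (fun y => f y t) 0)^2 + deriv (fun y => g y t) 0)
        (Set.Ico 0 T) t := by
  set F : ℝ × ℝ → ℝ := fun p => f p.1 p.2 with hF
  set Gm : ℝ × ℝ → ℝ := fun p => g p.1 p.2 with hGm
  have hFd : Differentiable ℝ F := hf.differentiable (by norm_num)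
  have hGd : Differentiable ℝ Gm := hg.differentiable (by norm_num)
  have hF1 : ContDiff ℝ 1 (fderiv ℝ F) := hf.fderiv_right (by norm_num)
  have hH : Differentiable ℝ (fderiv ℝ F) := hF1.differentiable (by norm_num)
  -- x-direction derivative of f
  have hA : ∀ x t : ℝ, HasDerivAt (fun y => f y t) (fderiv ℝ F (x, t) (1, 0)) x := by
    intro x t
    have h1 : HasDerivAt (fun y : ℝ => (y, t)) ((1:ℝ), (0:ℝ)) x :=
      HasDerivAt.prodMk (hasDerivAt_id x) (hasDerivAt_const x t)
    exact ((hFd (x, t)).hasFDerivAt).comp_hasDerivAt x h1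
  have hAg : ∀ x t : ℝ, HasDerivAt (fun y => g y t) (fderiv ℝ Gm (x, t) (1, 0)) x := by
    intro x t
    have h1 : HasDerivAt (fun y : ℝ => (y, t)) ((1:ℝ), (0:ℝ)) x :=
      HasDerivAt.prodMk (hasDerivAt_id x) (hasDerivAt_const x t)
    exact ((hGd (x, t)).hasFDerivAt).comp_hasDerivAt x h1
  -- t-direction derivative of f
  have hB : ∀ x t : ℝ, HasDerivAt (fun s => f x s) (fderiv ℝ F (x, t) (0, 1)) t := by
    intro x t
    have h1 : HasDerivAt (fun s : ℝ => (x, s)) ((0:ℝ), (1:ℝ)) t :=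
      HasDerivAt.prodMk (hasDerivAt_const t x) (hasDerivAt_id t)
    exact ((hFd (x, t)).hasFDerivAt).comp_hasDerivAt t h1
  intro t ht
  -- U(s) = fderiv F (0,s) (1,0)
  have hUeq : (fun s => deriv (fun y => f y s) 0) = fun s => fderiv ℝ F (0, s) (1, 0) := by
    funext s; exact (hA 0 s).deriv
  -- derivative of U
  have hC : HasDerivAt (fun s => fderiv ℝ F (0, s) (1, 0))
      (fderiv ℝ (fderiv ℝ F) (0, t) (0, 1) (1, 0)) t := by
    have h1 : HasDerivAt (fun s : ℝ => ((0:ℝ), s)) ((0:ℝ), (1:ℝ)) t :=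
      HasDerivAt.prodMk (hasDerivAt_const t (0:ℝ)) (hasDerivAt_id t)
    have h2 : HasDerivAt (fun s : ℝ => fderiv ℝ F (0, s))
        (fderiv ℝ (fderiv ℝ F) (0, t) (0, 1)) t :=
      ((hH (0, t)).hasFDerivAt).comp_hasDerivAt t h1
    simpa using h2.clm_apply (hasDerivAt_const t ((1:ℝ), (0:ℝ)))
  -- derivative in x of x ↦ fderiv F (x,t) (0,1)
  have hD : HasDerivAt (fun x => fderiv ℝ F (x, t) (0, 1))
      (fderiv ℝ (fderiv ℝ F) (0, t) (1, 0) (0, 1)) 0 := by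
    have h1 : HasDerivAt (fun x : ℝ => (x, t)) ((1:ℝ), (0:ℝ)) 0 :=
      HasDerivAt.prodMk (hasDerivAt_id 0) (hasDerivAt_const 0 t)
    have h2 : HasDerivAt (fun x : ℝ => fderiv ℝ F (x, t))
        (fderiv ℝ (fderiv ℝ F) (0, t) (1, 0)) 0 :=
      ((hH (0, t)).hasFDerivAt).comp_hasDerivAt 0 h1
    simpa using h2.clm_apply (hasDerivAt_const 0 ((0:ℝ), (1:ℝ)))
  -- x ↦ fderiv F (x,t) (1,0) is differentiable at 0
  have hE : HasDerivAt (fun x => fderiv ℝ F (x, t) (1, 0))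
      (fderiv ℝ (fderiv ℝ F) (0, t) (1, 0) (1, 0)) 0 := by
    have h1 : HasDerivAt (fun x : ℝ => (x, t)) ((1:ℝ), (0:ℝ)) 0 :=
      HasDerivAt.prodMk (hasDerivAt_id 0) (hasDerivAt_const 0 t)
    have h2 : HasDerivAt (fun x : ℝ => fderiv ℝ F (x, t))
        (fderiv ℝ (fderiv ℝ F) (0, t) (1, 0)) 0 :=
      ((hH (0, t)).hasFDerivAt).comp_hasDerivAt 0 h1
    simpa using h2.clm_apply (hasDerivAt_const 0 ((1:ℝ), (0:ℝ)))
  -- PDE identity in terms of fderiv, at time t, for all x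
  have hid : (fun x => fderiv ℝ F (x, t) (0, 1))
      = fun x => g x t - f x t * fderiv ℝ F (x, t) (1, 0) := by
    funext x
    have h := heq x t ht
    rw [(hA x t).deriv, (hB x t).deriv] at h
    linarith
  -- derivative of RHS at x = 0
  have hRHS : HasDerivAt (fun x => g x t - f x t * fderiv ℝ F (x, t) (1, 0))
      (fderiv ℝ Gm (0, t) (1, 0) - (fderiv ℝ F (0, t) (1, 0))^2) 0 := by
    have h1 := (hAg 0 t).sub ((hA 0 t).mul hE)
    have hf00 : f 0 t = 0 := hf0 t ht
    simp only [hf00, zero_mul, mul_zero, add_zero] at h1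
    rw [sq]
    exact h1
  have hkey : fderiv ℝ (fderiv ℝ F) (0, t) (1, 0) (0, 1)
      = fderiv ℝ Gm (0, t) (1, 0) - (fderiv ℝ F (0, t) (1, 0))^2 := by
    rw [← hD.deriv, hid, hRHS.deriv]
  have hsymm : fderiv ℝ (fderiv ℝ F) (0, t) (0, 1) (1, 0)
      = fderiv ℝ (fderiv ℝ F) (0, t) (1, 0) (0, 1) :=
    (hf.contDiffAt.isSymmSndFDerivAt (by simp)) _ _
  rw [hUeq, (hA 0 t).deriv, (hAg 0 t).deriv]
  have : -(fderiv ℝ F (0, t) (1, 0))^2 + fderiv ℝ Gm (0, t) (1, 0)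
      = fderiv ℝ (fderiv ℝ F) (0, t) (0, 1) (1, 0) := by
    rw [hsymm, hkey]; ring
  rw [this]
  exact hC.hasDerivWithinAt

/-- For C² odd 2π-periodic solutions of the local MRS system
`∂ₜu + u∂ₓu = v`, `∂ₜv + v∂ₓv = -u`, the quantities `U(t) = ∂ₓu(0,t)` and
`V(t) = ∂ₓv(0,t)` satisfy `U' = -U² + V`, `V' = -V² - U`. -/
theorem stmt6 (T : ℝ) (u v : ℝ → ℝ → ℝ)
    (hu : ContDiff ℝ 2 (fun p : ℝ × ℝ => u p.1 p.2))
    (hv : ContDiff ℝ 2 (fun p : ℝ × ℝ => v p.1 p.2))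
    (huper : ∀ x t, u (x + 2*π) t = u x t)
    (hvper : ∀ x t, v (x + 2*π) t = v x t)
    (heq1 : ∀ x : ℝ, ∀ t ∈ Set.Ico (0:ℝ) T,
      deriv (fun s => u x s) t + u x t * deriv (fun y => u y t) x = v x t)
    (heq2 : ∀ x : ℝ, ∀ t ∈ Set.Ico (0:ℝ) T,
      deriv (fun s => v x s) t + v x t * deriv (fun y => v y t) x = -u x t)
    (huodd : ∀ x, ∀ t ∈ Set.Ico (0:ℝ) T, u (-x) t = -u x t)
    (hvodd : ∀ x, ∀ t ∈ Set.Ico (0:ℝ) T, v (-x) t = -v x t) :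
    ∀ t ∈ Set.Ico (0:ℝ) T,
      HasDerivWithinAt (fun s => deriv (fun y => u y s) 0)
        (-(deriv (fun y => u y t) 0)^2 + deriv (fun y => v y t) 0)
        (Set.Ico 0 T) t ∧
      HasDerivWithinAt (fun s => deriv (fun y => v y s) 0)
        (-(deriv (fun y => v y t) 0)^2 - deriv (fun y => u y t) 0)
        (Set.Ico 0 T) t := by
  have hu0 : ∀ t ∈ Set.Ico (0:ℝ) T, u 0 t = 0 := by
    intro t ht; have := huodd 0 t ht; simp at this; linarith
  have hv0 : ∀ t ∈ Set.Ico (0:ℝ) T, v 0 t = 0 := by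
    intro t ht; have := hvodd 0 t ht; simp at this; linarith
  intro t ht
  constructor
  · exact key_aux T u v hu hv heq1 hu0 t ht
  · have h := key_aux T v (fun x t => -u x t) hv hu.neg heq2 hv0 t ht
    have hud : ∀ x s : ℝ, DifferentiableAt ℝ (fun y => u y s) x := by
      intro x s
      have h1 : HasDerivAt (fun y : ℝ => (y, s)) ((1:ℝ), (0:ℝ)) x :=
        HasDerivAt.prodMk (hasDerivAt_id x) (hasDerivAt_const x s)
      exact (((hu.differentiable (by norm_num)) (x, s)).hasFDerivAt.comp_hasDerivAt
        x h1).differentiableAt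
    have hneg : deriv (fun y => -u y t) 0 = -deriv (fun y => u y t) 0 := by
      have := (hud 0 t).hasDerivAt.neg
      exact this.deriv
    rw [hneg] at h
    simpa [sub_eq_add_neg] using h
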